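/- arXiv:2108.02193 — 3 statements merged into one kernel-verified Lean document; each statement's English description precedes it below -/
import Mathlib

section
/- Consider the two-sided 2-periodic membrane Markov chain of Example 2.2 with transition matrix ℙ on states {(−0,0),(−0,1),(+0,0),(+0,1)} given by rows ((1−p)(1−α), (1−p)α, pα, p(1−α)), (pα, p(1−α), (1−p)(1−α), (1−p)α), (0, 0, α, 1−α), (1−α, α, 0, 0), where α = 2−√2 and p ∈ [0,1]. Then the unique stationary distribution π satisfies π_{(+0,0)} + π_{(+0,1)} − π_{(−0,0)} − π_{(−0,1)} = (2α−1)(α(2p−1) + (p−1)²) / ((1−α)(2α+1) + (2α−1)p²). -/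
open Matrix

/-- for the two-sided 2-periodic membrane chain of Example 2.2 (states
ordered (−0,0),(−0,1),(+0,0),(+0,1), α = 2−√2, p ∈ [0,1]), the stationary distribution π
satisfies the effective-permeability identity
π₊₀+π₊₁−π₋₀−π₋₁ = (2α−1)(α(2p−1)+(p−1)²) / ((1−α)(2α+1)+(2α−1)p²). -/
theorem stmt13 (p : ℝ) (hp : p ∈ Set.Icc (0 : ℝ) 1)
    (α : ℝ) (hα : α = 2 - Real.sqrt 2)
    (P : Matrix (Fin 4) (Fin 4) ℝ)
    (hP : P = !![(1 - p) * (1 - α), (1 - p) * α, p * α, p * (1 - α);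
                 p * α, p * (1 - α), (1 - p) * (1 - α), (1 - p) * α;
                 0, 0, α, 1 - α;
                 1 - α, α, 0, 0])
    (π : Fin 4 → ℝ) (hπnn : ∀ i, 0 ≤ π i) (hπsum : ∑ i, π i = 1)
    (hπstat : ∀ j, ∑ i, π i * P i j = π j) :
    π 2 + π 3 - π 0 - π 1 =
      (2 * α - 1) * (α * (2 * p - 1) + (p - 1) ^ 2) /
        ((1 - α) * (2 * α + 1) + (2 * α - 1) * p ^ 2) := by
  have hs : Real.sqrt 2 ^ 2 = 2 := Real.sq_sqrt (by norm_num)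
  have hs0 : (0 : ℝ) ≤ Real.sqrt 2 := Real.sqrt_nonneg 2
  have hα2 : α ^ 2 = 4 * α - 2 := by rw [hα]; nlinarith
  have hD : (0 : ℝ) < (1 - α) * (2 * α + 1) + (2 * α - 1) * p ^ 2 := by
    rw [hα]; nlinarith [sq_nonneg p]
  have e0 := hπstat 0
  have e1 := hπstat 1
  have e2 := hπstat 2
  simp [hP, Fin.sum_univ_four] at e0 e1 e2
  rw [Fin.sum_univ_four] at hπsum
  rw [eq_div_iff hD.ne']
  linear_combination (10 - 14 * α - 2 * p) * e0 + (6 - 10 * α + (4 - 4 * α) * p) * e1 +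
    (-2 + (2 - 4 * α) * p) * e2 +
    (3 - 5 * α + (-6 + 10 * α) * p + (-1 + 2 * α) * p ^ 2) * hπsum +
    (2 - 2 * π 0 + 2 * π 1 - 2 * π 2 - 6 * π 3 - 4 * p + 8 * p * π 0 + 4 * p * π 2 +
      4 * p * π 3) * hα2
end

section
/- For the two-dimensional simple symmetric random walk Z = (X, Y) on ℤ² started at (1, 0), let τ = inf{n ≥ 0 : X(n) = 0} be the first hitting time of the vertical axis. Then P(Y(τ) is even) = 2 − √2. -/
open Classical
open scoped ENNReal NNReal

namespace Stmt14

def Sset : Set (ℤ × ℤ) := {(1, 0), (-1, 0), (0, 1), (0, -1)}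

def XS (w : List (ℤ × ℤ)) : ℤ := (w.map Prod.fst).sum
def YS (w : List (ℤ × ℤ)) : ℤ := (w.map Prod.snd).sum

def Good (c : ℤ) (w : List (ℤ × ℤ)) : Prop :=
  (∀ i < w.length, c + XS (w.take i) ≠ 0) ∧ c + XS w = 0

def InS (w : List (ℤ × ℤ)) : Prop := ∀ v ∈ w, v ∈ Sset

@[simp] lemma XS_nil : XS [] = 0 := rfl
@[simp] lemma YS_nil : YS [] = 0 := rfl
@[simp] lemma XS_cons (v : ℤ × ℤ) (t : List (ℤ × ℤ)) : XS (v :: t) = v.1 + XS t := rfl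
@[simp] lemma YS_cons (v : ℤ × ℤ) (t : List (ℤ × ℤ)) : YS (v :: t) = v.2 + YS t := rfl

lemma XS_append (u v : List (ℤ × ℤ)) : XS (u ++ v) = XS u + XS v := by
  simp [XS]

lemma good_cons {c : ℤ} {v : ℤ × ℤ} {t : List (ℤ × ℤ)} :
    Good c (v :: t) ↔ c ≠ 0 ∧ Good (c + v.1) t := by
  constructor
  · rintro ⟨h1, h2⟩
    refine ⟨by simpa using h1 0 (Nat.succ_pos _), ⟨fun i hi => ?_, ?_⟩⟩
    · have := h1 (i + 1) (by simpa using hi)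
      simpa [List.take_succ_cons, add_assoc] using this
    · simpa [XS_cons, add_assoc] using h2
  · rintro ⟨hc, h1, h2⟩
    refine ⟨fun i hi => ?_, by simpa [add_assoc] using h2⟩
    cases i with
    | zero => simpa using hc
    | succ j =>
      have hj : j < t.length := by simpa using hi
      simpa [List.take_succ_cons, add_assoc] using h1 j hj

lemma good_zero_iff {t : List (ℤ × ℤ)} : Good 0 t ↔ t = [] := by
  constructor
  · intro h
    cases t with
    | nil => rfl
    | cons v t' => exact absurd (good_cons.mp h).1 (by simp)
  · rintro rfl; exact ⟨by simp, by simp⟩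

@[simp] lemma good_nil_iff {c : ℤ} : Good c [] ↔ c = 0 := by
  constructor
  · rintro ⟨-, h⟩; simpa using h
  · rintro rfl; exact ⟨by simp, by simp⟩

lemma XS_take_succ {w : List (ℤ × ℤ)} {i : ℕ} (h : i < w.length) :
    XS (w.take (i + 1)) = XS (w.take i) + (w.getD i 0).1 := by
  rw [List.take_succ]
  rw [XS_append]
  congr 1
  rw [List.getElem?_eq_getElem h]
  simp [XS, List.getD, List.getElem?_eq_getElem h]

lemma fst_ge_neg_one {v : ℤ × ℤ} (hv : v ∈ Sset) : -1 ≤ v.1 := by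
  rcases hv with h | h | h | h <;> simp_all

/-- prefix values of a `Good 1` word with steps in `Sset` stay ≥ 1. -/
lemma good_pos {u : List (ℤ × ℤ)} (hS : InS u) (hu : Good 1 u) :
    ∀ i < u.length, 1 ≤ 1 + XS (u.take i) := by
  intro i hi
  induction i with
  | zero => simp
  | succ j ih =>
    have hj : j < u.length := Nat.lt_of_succ_lt hi
    have hstep : -1 ≤ (u.getD j 0).1 := by
      have hmem : u.getD j 0 ∈ u := by
        rw [List.getD_eq_getElem _ _ hj]; exact List.getElem_mem hj
      exact fst_ge_neg_one (hS _ hmem)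
    have h0 : 1 + XS (u.take (j + 1)) ≠ 0 := hu.1 _ hi
    rw [XS_take_succ hj] at h0
    have := ih hj
    rw [XS_take_succ hj]
    omega


lemma good_append {u v : List (ℤ × ℤ)} (hSu : InS u) (hu : Good 1 u) (hv : Good 1 v) :
    Good 2 (u ++ v) := by
  have hXu : XS u = -1 := by have := hu.2; omega
  constructor
  · intro i hi
    rw [List.take_append, XS_append]
    rcases lt_trichotomy i u.length with h | h | h
    · have h1 := good_pos hSu hu i h
      have : i - u.length = 0 := by omega
      rw [this]
      simpa using by omega
    · rw [h]
      simp [List.take_length, hXu]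
    · have hj : i - u.length < v.length := by
        have := (List.length_append (as := u) (bs := v)) ▸ hi; omega
      have h2 := hv.1 _ hj
      rw [List.take_of_length_le (le_of_lt h)]
      omega
  · rw [XS_append]
    have := hv.2; omega

lemma split_unique {u v u' v' : List (ℤ × ℤ)} (h : u ++ v = u' ++ v')
    (hu : Good 1 u) (hu' : Good 1 u') : u = u' ∧ v = v' := by
  have key : ∀ (a b a' b' : List (ℤ × ℤ)), a ++ b = a' ++ b' → Good 1 a → Good 1 a' →
      a.length ≤ a'.length → a = a' := by
    intro a b a' b' hab ha ha' hlen
    have hpre : a <+: a' := by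
      have h1 : a <+: a' ++ b' := hab ▸ List.prefix_append a b
      exact List.prefix_of_prefix_length_le h1 (List.prefix_append a' b') hlen
    rcases Nat.lt_or_ge a.length a'.length with hlt | hge
    · exfalso
      have htake : a'.take a.length = a := (List.prefix_iff_eq_take.mp hpre).symm
      have := ha'.1 a.length hlt
      rw [htake] at this
      exact this (ha.2)
    · have : a.length = a'.length := le_antisymm hlen hge
      exact List.IsPrefix.eq_of_length hpre this
  rcases le_total u.length u'.length with hle | hle
  · have h1 : u = u' := key u v u' v' h hu hu' hle
    exact ⟨h1, by subst h1; exact List.append_cancel_left h⟩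
  · have h1 : u' = u := key u' v' u v h.symm hu' hu hle
    exact ⟨h1.symm, by subst h1; exact List.append_cancel_left h⟩

lemma split_exists {w : List (ℤ × ℤ)} (hS : InS w) (hw : Good 2 w) :
    ∃ u v, w = u ++ v ∧ Good 1 u ∧ Good 1 v ∧ InS u ∧ InS v := by
  have hex : ∃ i, i ≤ w.length ∧ 2 + XS (w.take i) = 1 := by
    by_contra hcon
    push_neg at hcon
    have hmono : ∀ i ≤ w.length, 2 ≤ 2 + XS (w.take i) := by
      intro i hi
      induction i with
      | zero => simp
      | succ j ih =>
        have hj : j < w.length := by omega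
        have hstep : -1 ≤ (w.getD j 0).1 := by
          have hmem : w.getD j 0 ∈ w := by
            rw [List.getD_eq_getElem _ _ hj]; exact List.getElem_mem hj
          exact fst_ge_neg_one (hS _ hmem)
        have h1 := ih (by omega)
        have h2 := hcon (j+1) hi
        rw [XS_take_succ hj] at h2 ⊢
        omega
    have := hmono w.length le_rfl
    rw [List.take_length] at this
    have := hw.2; omega
  set T := Nat.find hex with hT
  obtain ⟨hTle, hThit⟩ := Nat.find_spec hex
  rw [← hT] at hTle hThit
  have hmin : ∀ j < T, 2 + XS (w.take j) ≠ 1 := by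
    intro j hj
    have := Nat.find_min hex hj
    push_neg at this
    exact this (le_trans (le_of_lt (lt_of_lt_of_le hj hTle)) le_rfl)
  refine ⟨w.take T, w.drop T, (List.take_append_drop T w).symm, ?_, ?_, ?_, ?_⟩
  · constructor
    · intro i hi
      rw [List.length_take] at hi
      have hiT : i < T := by omega
      rw [List.take_take, min_eq_left (le_of_lt hiT)]
      have := hmin i hiT
      omega
    · omega
  · have hlen : (w.drop T).length = w.length - T := List.length_drop
    constructor
    · intro i hi
      have hkey : w.take (T + i) = w.take T ++ (w.drop T).take i := List.take_add
      rw [hlen] at hi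
      have h2 := hw.1 (T + i) (by omega)
      rw [hkey, XS_append] at h2
      omega
    · have hkey : XS w = XS (w.take T) + XS (w.drop T) := by
        conv_lhs => rw [← List.take_append_drop T w]
        rw [XS_append]
      have := hw.2
      omega
  · exact fun v hv => hS v (List.mem_of_mem_take hv)
  · exact fun v hv => hS v (List.mem_of_mem_drop hv)

lemma XYL_even {w : List (ℤ × ℤ)} (hS : InS w) : Even (XS w + YS w + w.length) := by
  induction w with
  | nil => simp
  | cons v t ih =>
    have hv := hS v (List.mem_cons_self)
    have ht : InS t := fun x hx => hS x (List.mem_cons_of_mem _ hx)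
    have he := ih ht
    have hv2 : Even (v.1 + v.2 + 1) := by
      rcases hv with h | h | h | h <;> (rw [show v = _ from h]; decide)
    have : XS (v :: t) + YS (v :: t) + ((v :: t).length : ℤ)
        = (v.1 + v.2 + 1) + (XS t + YS t + t.length) := by
      simp only [XS_cons, YS_cons, List.length_cons]; push_cast; ring
    rw [this]
    exact hv2.add he

lemma good_parity {w : List (ℤ × ℤ)} (hS : InS w) (hw : Good 1 w) :
    ¬ Even (YS w) ↔ Even w.length := by
  have he := XYL_even hS
  have hx : XS w = -1 := by have := hw.2; omega
  rw [hx] at he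
  rw [Int.even_iff] at he
  rw [Int.even_iff, ← Int.even_coe_nat, Int.even_iff]
  omega


noncomputable def F (c : ℤ) (x : ℝ) (w : List (ℤ × ℤ)) : ℝ :=
  if InS w ∧ Good c w then x ^ w.length else 0

lemma F_nonneg (c : ℤ) (w : List (ℤ × ℤ)) : 0 ≤ F c (4⁻¹ : ℝ) w := by
  unfold F; split <;> positivity

lemma abs_F_le {x : ℝ} (hx : |x| ≤ 4⁻¹) (c : ℤ) (w : List (ℤ × ℤ)) :
    |F c x w| ≤ F c (4⁻¹ : ℝ) w := by
  unfold F
  split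
  · rw [abs_pow]
    exact pow_le_pow_left₀ (abs_nonneg x) hx _
  · simp

lemma summable_F {x : ℝ} (hx : |x| ≤ 4⁻¹) {c : ℤ} (hM : Summable (F c (4⁻¹ : ℝ))) :
    Summable (F c x) :=
  (Summable.of_nonneg_of_le (fun w => abs_nonneg _) (abs_F_le hx c) hM).of_abs

lemma InS_cons {v : ℤ × ℤ} {t : List (ℤ × ℤ)} : InS (v :: t) ↔ v ∈ Sset ∧ InS t := by
  simp [InS]

lemma mem_Sset_R : ((1 : ℤ), (0 : ℤ)) ∈ Sset := by left; rfl
lemma mem_Sset_L : ((-1 : ℤ), (0 : ℤ)) ∈ Sset := by right; left; rfl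
lemma mem_Sset_U : ((0 : ℤ), (1 : ℤ)) ∈ Sset := by right; right; left; rfl
lemma mem_Sset_D : ((0 : ℤ), (-1 : ℤ)) ∈ Sset := by right; right; right; rfl

lemma F1_cons_R (x : ℝ) (t : List (ℤ × ℤ)) :
    F 1 x (((1 : ℤ), (0 : ℤ)) :: t) = x * F 2 x t := by
  unfold F
  rw [InS_cons, good_cons]
  have : ((1 : ℤ) + ((1 : ℤ), (0 : ℤ)).1) = 2 := by norm_num
  rw [this]
  by_cases h : InS t ∧ Good 2 t
  · simp [h, mem_Sset_R, pow_succ, mul_comm]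
  · rw [if_neg, if_neg h, mul_zero]
    rintro ⟨⟨-, h1⟩, -, h2⟩; exact h ⟨h1, h2⟩

lemma F1_cons_U (x : ℝ) (t : List (ℤ × ℤ)) :
    F 1 x (((0 : ℤ), (1 : ℤ)) :: t) = x * F 1 x t := by
  unfold F
  rw [InS_cons, good_cons]
  have : ((1 : ℤ) + ((0 : ℤ), (1 : ℤ)).1) = 1 := by norm_num
  rw [this]
  by_cases h : InS t ∧ Good 1 t
  · simp [h, mem_Sset_U, pow_succ, mul_comm]
  · rw [if_neg, if_neg h, mul_zero]
    rintro ⟨⟨-, h1⟩, -, h2⟩; exact h ⟨h1, h2⟩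

lemma F1_cons_D (x : ℝ) (t : List (ℤ × ℤ)) :
    F 1 x (((0 : ℤ), (-1 : ℤ)) :: t) = x * F 1 x t := by
  unfold F
  rw [InS_cons, good_cons]
  have : ((1 : ℤ) + ((0 : ℤ), (-1 : ℤ)).1) = 1 := by norm_num
  rw [this]
  by_cases h : InS t ∧ Good 1 t
  · simp [h, mem_Sset_D, pow_succ, mul_comm]
  · rw [if_neg, if_neg h, mul_zero]
    rintro ⟨⟨-, h1⟩, -, h2⟩; exact h ⟨h1, h2⟩

lemma F1_cons_L (x : ℝ) (t : List (ℤ × ℤ)) :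
    F 1 x (((-1 : ℤ), (0 : ℤ)) :: t) = if t = [] then x else 0 := by
  unfold F
  rw [InS_cons, good_cons]
  have : ((1 : ℤ) + ((-1 : ℤ), (0 : ℤ)).1) = 0 := by norm_num
  rw [this]
  by_cases h : t = []
  · subst h
    simp [mem_Sset_L, InS, good_zero_iff]
  · rw [if_neg, if_neg h]
    rintro ⟨-, -, h2⟩
    exact h (good_zero_iff.mp h2)


noncomputable def Cl (x : ℝ) (a : ℤ × ℤ) (w : List (ℤ × ℤ)) : ℝ :=
  if w.head? = some a then F 1 x w else 0

lemma abs_Cl_le {x : ℝ} (hx : |x| ≤ 4⁻¹) (a : ℤ × ℤ) (w : List (ℤ × ℤ)) :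
    |Cl x a w| ≤ F 1 (4⁻¹ : ℝ) w := by
  unfold Cl
  split
  · exact abs_F_le hx 1 w
  · simpa using F_nonneg 1 w

lemma summable_Cl {x : ℝ} (hx : |x| ≤ 4⁻¹) (hM : Summable (F 1 (4⁻¹ : ℝ))) (a : ℤ × ℤ) :
    Summable (Cl x a) :=
  (Summable.of_nonneg_of_le (fun w => abs_nonneg _) (abs_Cl_le hx a) hM).of_abs

lemma Cl_split (x : ℝ) (w : List (ℤ × ℤ)) :
    F 1 x w = Cl x (1, 0) w + Cl x (-1, 0) w + Cl x (0, 1) w + Cl x (0, -1) w := by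
  unfold Cl
  cases w with
  | nil => simp [F]
  | cons v t =>
    simp only [List.head?_cons, Option.some.injEq]
    by_cases hg : InS (v :: t) ∧ Good 1 (v :: t)
    · have hv := hg.1 v (List.mem_cons_self)
      simp only [Sset, Set.mem_insert_iff, Set.mem_singleton_iff] at hv
      rcases hv with h | h | h | h <;> subst h <;> simp [Prod.mk.injEq]
    · have hF : F 1 x (v :: t) = 0 := by unfold F; rw [if_neg hg]
      simp only [hF]
      split_ifs <;> simp

lemma tsum_Cl (x : ℝ) (a : ℤ × ℤ) :
    ∑' w, Cl x a w = ∑' t, F 1 x (a :: t) := by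
  have key : ∑' t, Cl x a (a :: t) = ∑' w, Cl x a w := by
    refine Function.Injective.tsum_eq (g := fun t => a :: t) (f := Cl x a) ?_ ?_
    · intro t t' h
      simpa using h
    · intro w hw
      unfold Cl at hw
      by_cases h : w.head? = some a
      · cases w with
        | nil => simp at h
        | cons b t =>
          simp only [List.head?_cons, Option.some.injEq] at h
          exact ⟨t, by rw [h]⟩
      · simp only [Function.mem_support, if_neg h, ne_eq, not_true_eq_false] at hw
  rw [← key]
  refine tsum_congr fun t => ?_
  unfold Cl
  rw [if_pos (by simp)]

lemma identity_one {x : ℝ} (hx : |x| ≤ 4⁻¹) (hM1 : Summable (F 1 (4⁻¹ : ℝ)))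
    (hM2 : Summable (F 2 (4⁻¹ : ℝ))) :
    ∑' w, F 1 x w = x + 2 * x * (∑' w, F 1 x w) + x * (∑' w, F 2 x w) := by
  have hsum := summable_Cl hx hM1
  have h1 : ∑' w, F 1 x w = (∑' w, Cl x (1, 0) w) + (∑' w, Cl x (-1, 0) w)
      + (∑' w, Cl x (0, 1) w) + (∑' w, Cl x (0, -1) w) := by
    rw [← Summable.tsum_add (hsum _) (hsum _), ← Summable.tsum_add ((hsum _).add (hsum _)) (hsum _),
      ← Summable.tsum_add (((hsum _).add (hsum _)).add (hsum _)) (hsum _)]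
    exact tsum_congr (Cl_split x)
  have hR : ∑' w, Cl x (1, 0) w = x * ∑' w, F 2 x w := by
    rw [tsum_Cl]
    simp only [F1_cons_R]
    exact tsum_mul_left
  have hL : ∑' w, Cl x (-1, 0) w = x := by
    rw [tsum_Cl]
    simp only [F1_cons_L]
    exact tsum_ite_eq ([] : List (ℤ × ℤ)) (fun _ => x)
  have hU : ∑' w, Cl x (0, 1) w = x * ∑' w, F 1 x w := by
    rw [tsum_Cl]
    simp only [F1_cons_U]
    exact tsum_mul_left
  have hD : ∑' w, Cl x (0, -1) w = x * ∑' w, F 1 x w := by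
    rw [tsum_Cl]
    simp only [F1_cons_D]
    exact tsum_mul_left
  rw [hR, hL, hU, hD] at h1
  linarith


lemma F_ne_zero {c : ℤ} {x : ℝ} {w : List (ℤ × ℤ)} (h : F c x w ≠ 0) :
    InS w ∧ Good c w := by
  by_contra hc
  exact h (by unfold F; rw [if_neg hc])

lemma F_eq_pow {c : ℤ} {x : ℝ} {w : List (ℤ × ℤ)} (h1 : InS w) (h2 : Good c w) :
    F c x w = x ^ w.length := by
  unfold F; rw [if_pos ⟨h1, h2⟩]

lemma InS_append {u v : List (ℤ × ℤ)} (hu : InS u) (hv : InS v) : InS (u ++ v) := by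
  intro z hz
  rcases List.mem_append.mp hz with h | h
  · exact hu z h
  · exact hv z h

lemma summable_abs_F {x : ℝ} (hx : |x| ≤ 4⁻¹) {c : ℤ} (hM : Summable (F c (4⁻¹ : ℝ))) :
    Summable fun w => ‖F c x w‖ := by
  simp only [Real.norm_eq_abs]
  exact Summable.of_nonneg_of_le (fun w => abs_nonneg _) (abs_F_le hx c) hM

lemma identity_two {x : ℝ} (hx : |x| ≤ 4⁻¹) (hx0 : x ≠ 0)
    (hM1 : Summable (F 1 (4⁻¹ : ℝ))) :
    ∑' w, F 2 x w = (∑' w, F 1 x w) * (∑' w, F 1 x w) := by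
  have hs1 : Summable (F 1 x) := summable_F hx hM1
  have hnorm := summable_abs_F hx hM1
  have hprod : Summable (fun p : List (ℤ × ℤ) × List (ℤ × ℤ) => F 1 x p.1 * F 1 x p.2) :=
    summable_mul_of_summable_norm hnorm hnorm
  rw [Summable.tsum_mul_tsum hs1 hs1 hprod]
  refine tsum_eq_tsum_of_ne_zero_bij (fun p => (p.val).1 ++ (p.val).2) ?_ ?_ ?_
  · rintro ⟨⟨u, v⟩, hp⟩ ⟨⟨u', v'⟩, hp'⟩ h
    simp only [Function.mem_support] at hp hp'
    have h1 := F_ne_zero (left_ne_zero_of_mul hp)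
    have h2 := F_ne_zero (right_ne_zero_of_mul hp)
    have h1' := F_ne_zero (left_ne_zero_of_mul hp')
    have h2' := F_ne_zero (right_ne_zero_of_mul hp')
    obtain ⟨e1, e2⟩ := split_unique h h1.2 h1'.2
    simp only [Subtype.mk.injEq, Prod.mk.injEq]
    exact ⟨e1, e2⟩
  · intro w hw
    have h := F_ne_zero hw
    obtain ⟨u, v, rfl, hu, hv, hSu, hSv⟩ := split_exists h.1 h.2
    refine ⟨⟨⟨u, v⟩, ?_⟩, rfl⟩
    simp only [Function.mem_support]
    rw [F_eq_pow hSu hu, F_eq_pow hSv hv]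
    exact mul_ne_zero (pow_ne_zero _ hx0) (pow_ne_zero _ hx0)
  · rintro ⟨⟨u, v⟩, hp⟩
    simp only [Function.mem_support] at hp
    have h1 := F_ne_zero (left_ne_zero_of_mul hp)
    have h2 := F_ne_zero (right_ne_zero_of_mul hp)
    dsimp only
    rw [F_eq_pow (InS_append h1.1 h2.1) (good_append h1.1 h1.2 h2.2),
      F_eq_pow h1.1 h1.2, F_eq_pow h2.1 h2.2, List.length_append, pow_add]

lemma S_quarter (hM1 : Summable (F 1 (4⁻¹ : ℝ))) (hM2 : Summable (F 2 (4⁻¹ : ℝ))) :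
    ∑' w, F 1 (4⁻¹ : ℝ) w = 1 := by
  have hx : |(4⁻¹ : ℝ)| ≤ 4⁻¹ := by rw [abs_of_nonneg] <;> norm_num
  have h1 := identity_one hx hM1 hM2
  rw [identity_two hx (by norm_num) hM1] at h1
  set S := ∑' w, F 1 (4⁻¹ : ℝ) w with hS
  have hsq : (S - 1) ^ 2 = 0 := by nlinarith [h1]
  have := pow_eq_zero_iff (n := 2) (by norm_num) |>.mp hsq
  linarith

lemma abs_F_neg (w : List (ℤ × ℤ)) : |F 1 (-(4⁻¹) : ℝ) w| = F 1 (4⁻¹ : ℝ) w := by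
  unfold F
  split
  · rw [abs_pow, abs_neg, abs_of_nonneg (by norm_num : (0:ℝ) ≤ 4⁻¹)]
  · simp

lemma S_neg (hM1 : Summable (F 1 (4⁻¹ : ℝ))) (hM2 : Summable (F 2 (4⁻¹ : ℝ))) :
    ∑' w, F 1 (-(4⁻¹) : ℝ) w = 2 * Real.sqrt 2 - 3 := by
  have hx : |(-(4⁻¹) : ℝ)| ≤ 4⁻¹ := by rw [abs_neg, abs_of_nonneg] <;> norm_num
  have h1 := identity_one hx hM1 hM2
  rw [identity_two hx (by norm_num) hM1] at h1
  set B := ∑' w, F 1 (-(4⁻¹) : ℝ) w with hB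
  have hBbound : |B| ≤ 1 := by
    have h2 : ‖B‖ ≤ ∑' w, ‖F 1 (-(4⁻¹) : ℝ) w‖ := norm_tsum_le_tsum_norm (summable_abs_F hx hM1)
    have h3 : (∑' w, ‖F 1 (-(4⁻¹) : ℝ) w‖) = ∑' w, F 1 (4⁻¹ : ℝ) w := by
      refine tsum_congr fun w => ?_
      rw [Real.norm_eq_abs, abs_F_neg]
    rw [h3, S_quarter hM1 hM2] at h2
    exact h2
  have hs2 : Real.sqrt 2 ^ 2 = 2 := Real.sq_sqrt (by norm_num)
  have hs2nn : 0 ≤ Real.sqrt 2 := Real.sqrt_nonneg 2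
  have hquad : (B + 3) ^ 2 = 8 := by nlinarith [h1]
  have hfac : (B + 3 - 2 * Real.sqrt 2) * (B + 3 + 2 * Real.sqrt 2) = 0 := by
    linear_combination hquad - 4 * hs2
  rcases mul_eq_zero.mp hfac with h | h
  · linarith
  · exfalso
    have : -1 ≤ B := by have := abs_le.mp hBbound; exact this.1
    linarith

noncomputable def Fe (w : List (ℤ × ℤ)) : ℝ :=
  if InS w ∧ Good 1 w ∧ Even w.length then (4⁻¹ : ℝ) ^ w.length else 0

lemma Fe_eq (w : List (ℤ × ℤ)) :
    Fe w = (F 1 (4⁻¹ : ℝ) w + F 1 (-(4⁻¹) : ℝ) w) / 2 := by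
  unfold Fe F
  by_cases hg : InS w ∧ Good 1 w
  · by_cases he : Even w.length
    · rw [if_pos ⟨hg.1, hg.2, he⟩, if_pos hg, if_pos hg, he.neg_pow]
      ring
    · rw [if_neg (by tauto), if_pos hg, if_pos hg,
        (Nat.not_even_iff_odd.mp he).neg_pow]
      ring
  · rw [if_neg (by tauto), if_neg hg, if_neg hg]
    norm_num

lemma Fe_le (w : List (ℤ × ℤ)) : Fe w ≤ F 1 (4⁻¹ : ℝ) w := by
  unfold Fe
  by_cases h : InS w ∧ Good 1 w ∧ Even w.length
  · rw [if_pos h, F_eq_pow h.1 h.2.1]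
  · rw [if_neg h]
    exact F_nonneg 1 w

lemma Fe_nonneg (w : List (ℤ × ℤ)) : 0 ≤ Fe w := by
  unfold Fe; split <;> positivity

lemma summable_Fe (hM1 : Summable (F 1 (4⁻¹ : ℝ))) : Summable Fe :=
  Summable.of_nonneg_of_le Fe_nonneg Fe_le hM1

lemma tsum_Fe (hM1 : Summable (F 1 (4⁻¹ : ℝ))) (hM2 : Summable (F 2 (4⁻¹ : ℝ))) :
    ∑' w, Fe w = Real.sqrt 2 - 1 := by
  have hx : |(-(4⁻¹) : ℝ)| ≤ 4⁻¹ := by rw [abs_neg, abs_of_nonneg] <;> norm_num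
  have hsneg : Summable (F 1 (-(4⁻¹) : ℝ)) := summable_F hx hM1
  have h1 : ∑' w, Fe w = ((∑' w, F 1 (4⁻¹ : ℝ) w) + ∑' w, F 1 (-(4⁻¹) : ℝ) w) / 2 := by
    rw [← Summable.tsum_add hM1 hsneg, ← tsum_div_const]
    exact tsum_congr Fe_eq
  rw [h1, S_quarter hM1 hM2, S_neg hM1 hM2]
  ring


lemma XS_take_eq_sum (w : List (ℤ × ℤ)) : ∀ k ≤ w.length,
    XS (w.take k) = ∑ j ∈ Finset.range k, (w.getD j 0).1 := by
  intro k hk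
  induction k with
  | zero => simp
  | succ j ih =>
    rw [Finset.sum_range_succ, ← ih (by omega), XS_take_succ (by omega)]

lemma YS_take_succ {w : List (ℤ × ℤ)} {i : ℕ} (h : i < w.length) :
    YS (w.take (i + 1)) = YS (w.take i) + (w.getD i 0).2 := by
  rw [List.take_succ]
  have : YS (w.take i ++ w[i]?.toList) = YS (w.take i) + YS (w[i]?.toList) := by
    simp [YS]
  rw [this]
  congr 1
  rw [List.getElem?_eq_getElem h]
  simp [YS, List.getD, List.getElem?_eq_getElem h]

lemma YS_take_eq_sum (w : List (ℤ × ℤ)) : ∀ k ≤ w.length,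
    YS (w.take k) = ∑ j ∈ Finset.range k, (w.getD j 0).2 := by
  intro k hk
  induction k with
  | zero => simp
  | succ j ih =>
    rw [Finset.sum_range_succ, ← ih (by omega), YS_take_succ (by omega)]

section Measure

variable {Ω : Type*} {m0 : MeasurableSpace Ω} {μ : MeasureTheory.Measure Ω}
  [MeasureTheory.IsProbabilityMeasure μ] (ξ : ℕ → Ω → ℤ × ℤ)

def Cyl (w : List (ℤ × ℤ)) : Set Ω := {ω | ∀ j < w.length, ξ j ω = w.getD j 0}

lemma Cyl_eq_iInter (w : List (ℤ × ℤ)) :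
    Cyl ξ w = ⋂ j ∈ Finset.range w.length, (ξ j) ⁻¹' {w.getD j 0} := by
  ext ω
  simp [Cyl, Set.mem_iInter]

lemma measurable_Cyl (hmeas : ∀ k, Measurable (ξ k)) (w : List (ℤ × ℤ)) :
    MeasurableSet (Cyl ξ w) := by
  rw [Cyl_eq_iInter]
  exact MeasurableSet.biInter (Finset.range w.length).countable_toSet
    fun j _ => (hmeas j) (measurableSet_singleton _)

variable {ξ}

lemma sum_fst_eq {w : List (ℤ × ℤ)} {ω : Ω} (hω : ω ∈ Cyl ξ w) {k : ℕ} (hk : k ≤ w.length) :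
    ∑ j ∈ Finset.range k, (ξ j ω).1 = XS (w.take k) := by
  rw [XS_take_eq_sum w k hk]
  exact Finset.sum_congr rfl fun j hj => by
    rw [hω j (lt_of_lt_of_le (Finset.mem_range.mp hj) hk)]

lemma sum_snd_eq {w : List (ℤ × ℤ)} {ω : Ω} (hω : ω ∈ Cyl ξ w) {k : ℕ} (hk : k ≤ w.length) :
    ∑ j ∈ Finset.range k, (ξ j ω).2 = YS (w.take k) := by
  rw [YS_take_eq_sum w k hk]
  exact Finset.sum_congr rfl fun j hj => by
    rw [hω j (lt_of_lt_of_le (Finset.mem_range.mp hj) hk)]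

lemma measure_singleton_notS (hmeas : ∀ k, Measurable (ξ k))
    (hunif : ∀ k v, v ∈ Sset → μ {ω | ξ k ω = v} = 1 / 4)
    (k : ℕ) {v : ℤ × ℤ} (hv : v ∉ Sset) : μ {ω | ξ k ω = v} = 0 := by
  have hpre : ∀ u : ℤ × ℤ, {ω | ξ k ω = u} = (ξ k) ⁻¹' {u} := fun u => by
    ext ω; simp
  have hmeasu : ∀ u : ℤ × ℤ, MeasurableSet ((ξ k) ⁻¹' {u}) :=
    fun u => (hmeas k) (measurableSet_singleton u)
  set A : Set Ω := (ξ k) ⁻¹' {(1, 0)} ∪ ((ξ k) ⁻¹' {(-1, 0)} ∪ ((ξ k) ⁻¹' {(0, 1)} ∪ (ξ k) ⁻¹' {(0, -1)})) with hA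
  have hAmeas : MeasurableSet A :=
    ((hmeasu _).union ((hmeasu _).union ((hmeasu _).union (hmeasu _))))
  have hdisj : ∀ (a b : ℤ × ℤ), a ≠ b → Disjoint ((ξ k) ⁻¹' {a}) ((ξ k) ⁻¹' {b}) := by
    intro a b hab
    exact Disjoint.preimage _ (by simp [hab])
  have hAval : μ A = 1 := by
    rw [hA, MeasureTheory.measure_union _ ((hmeasu _).union ((hmeasu _).union (hmeasu _))),
      MeasureTheory.measure_union _ ((hmeasu _).union (hmeasu _)),
      MeasureTheory.measure_union _ (hmeasu _)]
    · rw [← hpre, ← hpre, ← hpre, ← hpre,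
        hunif k _ mem_Sset_R, hunif k _ mem_Sset_L, hunif k _ mem_Sset_U, hunif k _ mem_Sset_D]
      rw [show (1/4 : ℝ≥0∞) + (1/4 + (1/4 + 1/4)) = 4 * 4⁻¹ by
          rw [ENNReal.div_eq_inv_mul]; ring,
        ENNReal.mul_inv_cancel (by norm_num) (by norm_num)]
    · exact hdisj _ _ (by decide)
    · refine Set.disjoint_union_right.mpr ⟨hdisj _ _ (by decide), hdisj _ _ (by decide)⟩
    · refine Set.disjoint_union_right.mpr ⟨hdisj _ _ (by decide),
        Set.disjoint_union_right.mpr ⟨hdisj _ _ (by decide), hdisj _ _ (by decide)⟩⟩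
  have hsub : {ω | ξ k ω = v} ⊆ Aᶜ := by
    intro ω hω
    simp only [Set.mem_setOf_eq] at hω
    simp only [hA, Set.mem_compl_iff, Set.mem_union, Set.mem_preimage, Set.mem_singleton_iff, hω]
    intro hcon
    rcases hcon with h | h | h | h
    · subst h; exact hv mem_Sset_R
    · subst h; exact hv mem_Sset_L
    · subst h; exact hv mem_Sset_U
    · subst h; exact hv mem_Sset_D
  have : μ Aᶜ = 0 := by
    rw [MeasureTheory.prob_compl_eq_one_sub hAmeas, hAval]
    simp
  exact le_antisymm (le_trans (MeasureTheory.measure_mono hsub) this.le) zero_le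

lemma measure_Cyl (hmeas : ∀ k, Measurable (ξ k))
    (hindep : ProbabilityTheory.iIndepFun ξ μ)
    (hunif : ∀ k v, v ∈ Sset → μ {ω | ξ k ω = v} = 1 / 4)
    (w : List (ℤ × ℤ)) :
    μ (Cyl ξ w) = if InS w then ((4 : ℝ≥0∞))⁻¹ ^ w.length else 0 := by
  by_cases hS : InS w
  · rw [if_pos hS, Cyl_eq_iInter]
    rw [hindep.measure_inter_preimage_eq_mul (Finset.range w.length)
      (sets := fun i => {w.getD i 0}) (fun i _ => measurableSet_singleton _)]
    have : ∀ j ∈ Finset.range w.length, μ ((ξ j) ⁻¹' {w.getD j 0}) = (4 : ℝ≥0∞)⁻¹ := by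
      intro j hj
      have hjlen := Finset.mem_range.mp hj
      have hmem : w.getD j 0 ∈ Sset := by
        apply hS
        rw [List.getD_eq_getElem _ _ hjlen]
        exact List.getElem_mem hjlen
      have := hunif j _ hmem
      have hpre : {ω | ξ j ω = w.getD j 0} = (ξ j) ⁻¹' {w.getD j 0} := by ext ω; simp
      rw [← hpre, this]
      rw [ENNReal.div_eq_inv_mul]
      simp
    rw [Finset.prod_congr rfl this, Finset.prod_const, Finset.card_range]
  · rw [if_neg hS]
    unfold InS at hS
    push_neg at hS
    obtain ⟨v, hvw, hv⟩ := hS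
    obtain ⟨j, hjlen, hjv⟩ := List.getElem_of_mem hvw
    have hsub : Cyl ξ w ⊆ {ω | ξ j ω = v} := by
      intro ω hω
      have := hω j hjlen
      simp only [Set.mem_setOf_eq]
      rw [this, List.getD_eq_getElem _ _ hjlen, hjv]
    exact le_antisymm
      (le_trans (MeasureTheory.measure_mono hsub)
        (measure_singleton_notS hmeas hunif j hv).le)
      zero_le

lemma Cyl_disjoint {c : ℤ} {w w' : List (ℤ × ℤ)} (hw : Good c w) (hw' : Good c w')
    (hne : w ≠ w') : Disjoint (Cyl ξ w) (Cyl ξ w') := by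
  rw [Set.disjoint_left]
  intro ω h h'
  have key : ∀ (u u' : List (ℤ × ℤ)), Good c u → Good c u' → ω ∈ Cyl ξ u → ω ∈ Cyl ξ u' →
      u.length < u'.length → False := by
    intro u u' hu hu' hcu hcu' hlen
    have h1 : ∑ j ∈ Finset.range u.length, (ξ j ω).1 = XS u := by
      have := sum_fst_eq hcu (le_refl u.length)
      rwa [List.take_length] at this
    have h2 : ∑ j ∈ Finset.range u.length, (ξ j ω).1 = XS (u'.take u.length) :=
      sum_fst_eq hcu' (le_of_lt hlen)
    have h3 := hu'.1 u.length hlen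
    rw [← h2, h1] at h3
    exact h3 (by have := hu.2; omega)
  rcases lt_trichotomy w.length w'.length with hlen | hlen | hlen
  · exact key w w' hw hw' h h' hlen
  · apply hne
    apply List.ext_getElem hlen
    intro j hj hj'
    have e1 := h j hj
    have e2 := h' j hj'
    rw [List.getD_eq_getElem _ _ hj] at e1
    rw [List.getD_eq_getElem _ _ hj'] at e2
    rw [← e1, ← e2]
  · exact key w' w hw' hw h' h hlen

lemma event_eq :
    {ω : Ω | ¬ Even (∑ k ∈ Finset.range
        (sInf {n : ℕ | 1 + ∑ j ∈ Finset.range n, (ξ j ω).1 = 0}), (ξ k ω).2)}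
    = ⋃ (w : {w : List (ℤ × ℤ) // Good 1 w ∧ ¬ Even (YS w)}), Cyl ξ w.1 := by
  ext ω
  simp only [Set.mem_setOf_eq, Set.mem_iUnion]
  constructor
  · intro hω
    set SS := {n : ℕ | 1 + ∑ j ∈ Finset.range n, (ξ j ω).1 = 0} with hSS
    have hne : SS.Nonempty := by
      by_contra h
      rw [Set.not_nonempty_iff_eq_empty] at h
      rw [h, Nat.sInf_empty] at hω
      simp at hω
    have hn : sInf SS ∈ SS := Nat.sInf_mem hne
    set n := sInf SS with hndef
    set w := (List.range n).map (fun j => ξ j ω) with hw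
    have hlen : w.length = n := by simp [hw]
    have hcyl : ω ∈ Cyl ξ w := by
      intro j hj
      rw [hlen] at hj
      rw [hw, List.getD_eq_getElem _ _ (by simpa using hj)]
      simp
    have hgood : Good 1 w := by
      constructor
      · intro i hi
        rw [hlen] at hi
        have hnotin : i ∉ SS := Nat.notMem_of_lt_sInf hi
        have hsum := sum_fst_eq hcyl (k := i) (by omega)
        intro hcon
        exact hnotin (by rw [hSS]; simp only [Set.mem_setOf_eq]; rw [hsum]; exact hcon)
      · have hsum := sum_fst_eq hcyl (k := w.length) le_rfl
        rw [List.take_length] at hsum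
        rw [← hsum, hlen]
        exact hn
    have hodd : ¬ Even (YS w) := by
      have hsum := sum_snd_eq hcyl (k := w.length) le_rfl
      rw [List.take_length] at hsum
      rw [← hsum, hlen]
      exact hω
    exact ⟨⟨w, hgood, hodd⟩, hcyl⟩
  · rintro ⟨⟨w, hgood, hodd⟩, hcyl⟩
    set SS := {n : ℕ | 1 + ∑ j ∈ Finset.range n, (ξ j ω).1 = 0} with hSS
    have hfst := sum_fst_eq hcyl (k := w.length) le_rfl
    rw [List.take_length] at hfst
    have hmem : w.length ∈ SS := by
      simp only [hSS, Set.mem_setOf_eq, hfst]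
      exact hgood.2
    have hlow : ∀ i < w.length, i ∉ SS := by
      intro i hi hin
      have hsum := sum_fst_eq hcyl (le_of_lt hi)
      simp only [hSS, Set.mem_setOf_eq] at hin
      rw [hsum] at hin
      exact hgood.1 i hi hin
    have hsinf : sInf SS = w.length := by
      refine le_antisymm (Nat.sInf_le hmem) ?_
      by_contra h
      push_neg at h
      exact hlow _ h (Nat.sInf_mem ⟨_, hmem⟩)
    rw [hsinf]
    have hsum := sum_snd_eq hcyl (k := w.length) le_rfl
    rw [List.take_length] at hsum
    rw [hsum]
    exact hodd

lemma summable_F_quarter (hmeas : ∀ k, Measurable (ξ k))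
    (hindep : ProbabilityTheory.iIndepFun ξ μ)
    (hunif : ∀ k v, v ∈ Sset → μ {ω | ξ k ω = v} = 1 / 4) (c : ℤ) :
    Summable (F c (4⁻¹ : ℝ)) := by
  set T := {w : List (ℤ × ℤ) // InS w ∧ Good c w} with hT
  have hdis : Pairwise (Function.onFun Disjoint fun w : T => Cyl ξ w.1) := by
    intro i j hij
    exact Cyl_disjoint i.2.2 j.2.2 fun h => hij (Subtype.ext h)
  have hmu := MeasureTheory.measure_iUnion (μ := μ) hdis (fun w => measurable_Cyl ξ hmeas w.1)
  have hle : ∑' w : T, μ (Cyl ξ w.1) ≤ 1 := by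
    rw [← hmu]
    exact MeasureTheory.prob_le_one
  have heq : ∀ w : T, μ (Cyl ξ w.1) = (4 : ℝ≥0∞)⁻¹ ^ w.1.length := fun w => by
    rw [measure_Cyl hmeas hindep hunif, if_pos w.2.1]
  rw [tsum_congr heq] at hle
  have hne : (∑' w : T, (4 : ℝ≥0∞)⁻¹ ^ w.1.length) ≠ ⊤ :=
    ne_top_of_le_ne_top ENNReal.one_ne_top hle
  have hsum0 : Summable fun w : T => ((4 : ℝ≥0∞)⁻¹ ^ w.1.length).toReal :=
    ENNReal.summable_toReal hne
  have hsum1 : Summable fun w : T => (4⁻¹ : ℝ) ^ w.1.length := by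
    refine hsum0.congr fun w => ?_
    rw [ENNReal.toReal_pow, ENNReal.toReal_inv]
    norm_num
  have hind : Summable (Set.indicator {w : List (ℤ × ℤ) | InS w ∧ Good c w}
      (fun w => (4⁻¹ : ℝ) ^ w.length)) := summable_subtype_iff_indicator.mp hsum1
  refine hind.congr fun w => ?_
  rw [Set.indicator_apply]
  unfold F
  by_cases h : InS w ∧ Good c w
  · rw [if_pos (by exact h), if_pos h]
  · rw [if_neg (by exact h), if_neg h]

lemma ofReal_quarter_pow (n : ℕ) :
    ENNReal.ofReal ((4⁻¹ : ℝ) ^ n) = (4 : ℝ≥0∞)⁻¹ ^ n := by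
  rw [ENNReal.ofReal_pow (by norm_num)]
  congr 1
  rw [ENNReal.ofReal_inv_of_pos (by norm_num)]
  norm_num

theorem main_result (hmeas : ∀ k, Measurable (ξ k))
    (hindep : ProbabilityTheory.iIndepFun ξ μ)
    (hunif : ∀ k v, v ∈ Sset → μ {ω | ξ k ω = v} = 1 / 4) :
    μ {ω | Even ((∑ k ∈ Finset.range
          (sInf {n : ℕ | 1 + ∑ j ∈ Finset.range n, (ξ j ω).1 = 0}), (ξ k ω).2))}
      = ENNReal.ofReal (2 - Real.sqrt 2) := by
  have hM1 := summable_F_quarter hmeas hindep hunif 1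
  have hM2 := summable_F_quarter hmeas hindep hunif 2
  have hs2 : Real.sqrt 2 ^ 2 = 2 := Real.sq_sqrt (by norm_num)
  have hs2nn : 0 ≤ Real.sqrt 2 := Real.sqrt_nonneg 2
  have h1le : (1 : ℝ) ≤ Real.sqrt 2 := by nlinarith
  have h2le : Real.sqrt 2 ≤ 2 := by nlinarith
  have hmeasEc : MeasurableSet {ω : Ω | ¬ Even (∑ k ∈ Finset.range
      (sInf {n : ℕ | 1 + ∑ j ∈ Finset.range n, (ξ j ω).1 = 0}), (ξ k ω).2)} := by
    rw [event_eq]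
    exact MeasurableSet.iUnion fun w => measurable_Cyl ξ hmeas w.1
  have hEc : μ {ω : Ω | ¬ Even (∑ k ∈ Finset.range
      (sInf {n : ℕ | 1 + ∑ j ∈ Finset.range n, (ξ j ω).1 = 0}), (ξ k ω).2)}
      = ENNReal.ofReal (Real.sqrt 2 - 1) := by
    rw [event_eq]
    have hdis : Pairwise (Function.onFun Disjoint
        fun w : {w : List (ℤ × ℤ) // Good 1 w ∧ ¬ Even (YS w)} => Cyl ξ w.1) := by
      intro i j hij
      exact Cyl_disjoint i.2.1 j.2.1 fun h => hij (Subtype.ext h)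
    rw [MeasureTheory.measure_iUnion hdis (fun w => measurable_Cyl ξ hmeas w.1)]
    have hperw : ∀ w : {w : List (ℤ × ℤ) // Good 1 w ∧ ¬ Even (YS w)},
        μ (Cyl ξ w.1) = ENNReal.ofReal (Fe w.1) := by
      rintro ⟨w, hgood, hodd⟩
      rw [measure_Cyl hmeas hindep hunif]
      by_cases hIn : InS w
      · rw [if_pos hIn]
        have heven : Even w.length := (good_parity hIn hgood).mp hodd
        unfold Fe
        rw [if_pos ⟨hIn, hgood, heven⟩, ofReal_quarter_pow]
      · rw [if_neg hIn]
        unfold Fe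
        rw [if_neg (by tauto)]
        simp
    rw [tsum_congr hperw]
    have hsub : Summable (fun w : {w : List (ℤ × ℤ) // Good 1 w ∧ ¬ Even (YS w)} => Fe w.1) :=
      (summable_Fe hM1).subtype _
    rw [← ENNReal.ofReal_tsum_of_nonneg (fun w => Fe_nonneg _) hsub]
    congr 1
    have hts : ∑' (w : {w : List (ℤ × ℤ) // Good 1 w ∧ ¬ Even (YS w)}), Fe w.1
        = ∑' w, Fe w := by
      have h0 : ∑' (w : {w : List (ℤ × ℤ) // Good 1 w ∧ ¬ Even (YS w)}), Fe w.1
          = ∑' (x : ({w : List (ℤ × ℤ) | Good 1 w ∧ ¬ Even (YS w)} : Set (List (ℤ × ℤ)))),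
            Fe x.1 := rfl
      rw [h0, tsum_subtype {w : List (ℤ × ℤ) | Good 1 w ∧ ¬ Even (YS w)} Fe]
      refine tsum_congr fun w => ?_
      rw [Set.indicator_apply]
      by_cases h : w ∈ {w : List (ℤ × ℤ) | Good 1 w ∧ ¬ Even (YS w)}
      · rw [if_pos h]
      · rw [if_neg h]
        by_contra hc
        have hne : Fe w ≠ 0 := fun h0 => hc h0.symm
        unfold Fe at hne
        split_ifs at hne with hcond
        · exact h ⟨hcond.2.1, (good_parity hcond.1 hcond.2.1).mpr hcond.2.2⟩
        · exact hne rfl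
    rw [hts, tsum_Fe hM1 hM2]
  have hcompl : {ω : Ω | Even (∑ k ∈ Finset.range
      (sInf {n : ℕ | 1 + ∑ j ∈ Finset.range n, (ξ j ω).1 = 0}), (ξ k ω).2)}
      = {ω : Ω | ¬ Even (∑ k ∈ Finset.range
      (sInf {n : ℕ | 1 + ∑ j ∈ Finset.range n, (ξ j ω).1 = 0}), (ξ k ω).2)}ᶜ := by
    ext ω
    simp [not_not]
  rw [hcompl, MeasureTheory.prob_compl_eq_one_sub hmeasEc, hEc]
  rw [show (2 - Real.sqrt 2 : ℝ) = 1 - (Real.sqrt 2 - 1) by ring,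
    ENNReal.ofReal_sub 1 (by linarith : (0:ℝ) ≤ Real.sqrt 2 - 1), ENNReal.ofReal_one]

end Measure

end Stmt14

open MeasureTheory ProbabilityTheory

/-- for the simple symmetric random walk Z = (X,Y) on ℤ² started at (1,0)
(written as the partial-sum process of i.i.d. uniform nearest-neighbour steps ξ), with
τ = inf{n : X(n) = 0} the first hitting time of the vertical axis, the probability that
Y(τ) is even equals 2 − √2. -/
theorem stmt14 {Ω : Type*} {m0 : MeasurableSpace Ω} {μ : Measure Ω} [IsProbabilityMeasure μ]
    (ξ : ℕ → Ω → ℤ × ℤ)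
    (hmeas : ∀ k, Measurable (ξ k))
    (hindep : iIndepFun ξ μ)
    (hident : ∀ k, Measure.map (ξ k) μ = Measure.map (ξ 0) μ)
    (hunif : ∀ k v, v ∈ ({(1, 0), (-1, 0), (0, 1), (0, -1)} : Set (ℤ × ℤ)) →
      μ {ω | ξ k ω = v} = 1 / 4) :
    μ {ω | Even ((∑ k ∈ Finset.range
          (sInf {n : ℕ | 1 + ∑ j ∈ Finset.range n, (ξ j ω).1 = 0}), (ξ k ω).2))}
      = ENNReal.ofReal (2 - Real.sqrt 2) :=
  Stmt14.main_result hmeas hindep hunif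
end

section
/- Let (X_n^{j,±})_{n} and (X^{j,±}) be processes indexed by a finite set such that X_n^{j,±} → X^{j,±} uniformly on [0,T] a.s., all are nonnegative, at each time at most one of the limit processes and at most one of the prelimit processes is positive, and the limit process spends Lebesgue-zero time at the common zero. Then for each j and each t ≤ T, ∫_0^t 1{X_n^{j,±}(s) > 0} ds → ∫_0^t 1{X^{j,±}(s) > 0} ds almost surely. -/
open MeasureTheory Set Filter

/-- convergence of occupation integrals. If finitely many nonnegative
processes with pairwise disjoint positivity sets converge a.s. uniformly on [0,T] to
limit processes with the same disjointness property, and the limit spends Lebesgue-zero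
time at the common zero, then the occupation times of the positivity sets converge. -/
theorem stmt18 {Ω : Type*} {m0 : MeasurableSpace Ω} {μ : Measure Ω} [IsProbabilityMeasure μ]
    {ι : Type*} [Fintype ι]
    (T : ℝ) (hT : 0 < T)
    (Xn : ℕ → ι → ℝ → Ω → ℝ) (X : ι → ℝ → Ω → ℝ)
    (hXcont : ∀ i ω, Continuous fun t => X i t ω)
    -- a.s. uniform convergence on [0,T]
    (hconv : ∀ᵐ ω ∂μ, ∀ i, TendstoUniformlyOn (fun n t => Xn n i t ω)
      (fun t => X i t ω) atTop (Icc 0 T))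
    -- nonnegativity
    (hnn : ∀ n i t ω, 0 ≤ Xn n i t ω) (hXnn : ∀ i t ω, 0 ≤ X i t ω)
    -- at each time at most one prelimit coordinate and at most one limit coordinate
    -- is positive
    (hdisjn : ∀ n i j, i ≠ j → ∀ t ω, Xn n i t ω * Xn n j t ω = 0)
    (hdisj : ∀ i j, i ≠ j → ∀ t ω, X i t ω * X j t ω = 0)
    -- the limit spends Lebesgue-zero time at the common zero
    (hzero : ∀ᵐ ω ∂μ, volume {s : ℝ | s ∈ Icc 0 T ∧ ∀ i, X i s ω = 0} = 0) :
    ∀ᵐ ω ∂μ, ∀ i, ∀ t ∈ Icc (0:ℝ) T,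
      Tendsto (fun n : ℕ => (volume {s : ℝ | s ∈ Ioc 0 t ∧ 0 < Xn n i s ω}).toReal)
        atTop (nhds ((volume {s : ℝ | s ∈ Ioc 0 t ∧ 0 < X i s ω}).toReal)) := by
  filter_upwards [hconv, hzero] with ω hω hz
  intro i t ht
  have hsub : Ioc (0:ℝ) t ⊆ Icc 0 T := fun s hs => ⟨hs.1.le, hs.2.trans ht.2⟩
  set Z : Set ℝ := {s | s ∈ Icc 0 T ∧ ∀ i, X i s ω = 0} with hZdef
  set A : Set ℝ := {s | s ∈ Ioc 0 t ∧ 0 < X i s ω} with hAdef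
  set B : Set ℝ := {s | s ∈ Ioc 0 t ∧ ∃ j, j ≠ i ∧ 0 < X j s ω} with hBdef
  set Aε : ℕ → Set ℝ := fun k => {s | s ∈ Ioc 0 t ∧ 1/(k+1:ℝ) < X i s ω} with hAεdef
  set Bε : ℕ → Set ℝ := fun k =>
    {s | s ∈ Ioc 0 t ∧ ∃ j, j ≠ i ∧ 1/(k+1:ℝ) < X j s ω} with hBεdef
  -- measurability
  have mA' : ∀ c : ℝ, MeasurableSet {s : ℝ | s ∈ Ioc 0 t ∧ c < X i s ω} := by
    intro c
    exact measurableSet_Ioc.inter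
      ((isOpen_lt continuous_const (hXcont i ω)).measurableSet)
  have mB' : ∀ c : ℝ, MeasurableSet {s : ℝ | s ∈ Ioc 0 t ∧ ∃ j, j ≠ i ∧ c < X j s ω} := by
    intro c
    have : {s : ℝ | s ∈ Ioc 0 t ∧ ∃ j, j ≠ i ∧ c < X j s ω}
        = Ioc 0 t ∩ ⋃ (j : ι) (_ : j ≠ i), {s : ℝ | c < X j s ω} := by
      ext s; simp [and_assoc]
    rw [this]
    exact measurableSet_Ioc.inter (MeasurableSet.iUnion fun j =>
      MeasurableSet.iUnion fun _ =>
        (isOpen_lt continuous_const (hXcont j ω)).measurableSet)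
  -- finiteness
  have hIocfin : volume (Ioc (0:ℝ) t) ≠ ⊤ := measure_Ioc_lt_top.ne
  have hfin : ∀ S : Set ℝ, S ⊆ Ioc 0 t → volume S ≠ ⊤ := fun S hS =>
    ((measure_mono hS).trans_lt measure_Ioc_lt_top).ne
  have hAsub : A ⊆ Ioc 0 t := fun s hs => hs.1
  have hBsub : B ⊆ Ioc 0 t := fun s hs => hs.1
  -- monotone unions
  have hmonoA : Monotone Aε := by
    intro k m hkm s hs
    refine ⟨hs.1, lt_of_le_of_lt ?_ hs.2⟩
    apply one_div_le_one_div_of_le (by positivity)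
    have : (k:ℝ) ≤ m := Nat.cast_le.2 hkm
    linarith
  have hmonoB : Monotone Bε := by
    intro k m hkm s hs
    obtain ⟨hs1, j, hj, hjlt⟩ := hs
    refine ⟨hs1, j, hj, lt_of_le_of_lt ?_ hjlt⟩
    apply one_div_le_one_div_of_le (by positivity)
    have : (k:ℝ) ≤ m := Nat.cast_le.2 hkm
    linarith
  have hUA : ⋃ k, Aε k = A := by
    ext s
    simp only [hAεdef, hAdef, mem_iUnion, mem_setOf_eq]
    constructor
    · rintro ⟨k, hs1, hs2⟩
      exact ⟨hs1, lt_trans (by positivity) hs2⟩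
    · rintro ⟨hs1, hs2⟩
      obtain ⟨k, hk⟩ := exists_nat_one_div_lt hs2
      exact ⟨k, hs1, hk⟩
  have hUB : ⋃ k, Bε k = B := by
    ext s
    simp only [hBεdef, hBdef, mem_iUnion, mem_setOf_eq]
    constructor
    · rintro ⟨k, hs1, j, hj, hs2⟩
      exact ⟨hs1, j, hj, lt_trans (by positivity) hs2⟩
    · rintro ⟨hs1, j, hj, hs2⟩
      obtain ⟨k, hk⟩ := exists_nat_one_div_lt hs2
      exact ⟨k, hs1, j, hj, hk⟩
  have hTA : Tendsto (fun k => (volume (Aε k)).toReal) atTop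
      (nhds ((volume A).toReal)) := by
    have := tendsto_measure_iUnion_atTop (μ := volume) hmonoA
    rw [hUA] at this
    exact (ENNReal.tendsto_toReal (hfin A hAsub)).comp this
  have hTB : Tendsto (fun k => (volume (Bε k)).toReal) atTop
      (nhds ((volume B).toReal)) := by
    have := tendsto_measure_iUnion_atTop (μ := volume) hmonoB
    rw [hUB] at this
    exact (ENNReal.tendsto_toReal (hfin B hBsub)).comp this
  -- the key measure identity: vol (Ioc \ B) ≤ vol A
  have hIocB : Ioc 0 t \ B ⊆ A ∪ Z := by
    rintro s ⟨hs, hsB⟩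
    by_cases h : 0 < X i s ω
    · exact Or.inl ⟨hs, h⟩
    · refine Or.inr ⟨hsub hs, fun j => ?_⟩
      by_cases hji : j = i
      · subst hji; exact le_antisymm (not_lt.1 h) (hXnn j s ω)
      · refine le_antisymm (not_lt.1 fun hpos => hsB ⟨hs, j, hji, hpos⟩) (hXnn j s ω)
  have hkey : (volume (Ioc 0 t \ B)).toReal ≤ (volume A).toReal := by
    apply ENNReal.toReal_mono (hfin A hAsub)
    calc volume (Ioc 0 t \ B) ≤ volume (A ∪ Z) := measure_mono hIocB
      _ ≤ volume A + volume Z := measure_union_le _ _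
      _ = volume A := by rw [hz, add_zero]
  -- convert diff measures to real subtraction
  have hdiff : ∀ k, (volume (Ioc 0 t \ Bε k)).toReal
      = (volume (Ioc (0:ℝ) t)).toReal - (volume (Bε k)).toReal := by
    intro k
    rw [measure_diff (fun s hs => hs.1) (mB' _).nullMeasurableSet
      (hfin _ fun s hs => hs.1)]
    exact ENNReal.toReal_sub_of_le (measure_mono fun s hs => hs.1) hIocfin
  have hdiffB : (volume (Ioc 0 t \ B)).toReal
      = (volume (Ioc (0:ℝ) t)).toReal - (volume B).toReal := by
    rw [measure_diff hBsub (mB' 0).nullMeasurableSet (hfin B hBsub)]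
    exact ENNReal.toReal_sub_of_le (measure_mono hBsub) hIocfin
  rw [Metric.tendsto_atTop]
  intro δ hδ
  -- choose k with good approximation
  have h1 : ∀ᶠ k in atTop, (volume A).toReal - δ/2 < (volume (Aε k)).toReal :=
    hTA.eventually (eventually_gt_nhds (by linarith))
  have h2 : ∀ᶠ k in atTop, (volume B).toReal - δ/2 < (volume (Bε k)).toReal :=
    hTB.eventually (eventually_gt_nhds (by linarith))
  obtain ⟨k, hk1, hk2⟩ := (h1.and h2).exists
  set ε : ℝ := 1/(k+1:ℝ) with hεdef
  have hε : 0 < ε := by positivity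
  -- uniform convergence: eventually all coordinates within ε/2 on [0,T]
  have hN : ∀ᶠ n in atTop, ∀ j, ∀ x ∈ Icc (0:ℝ) T,
      dist (X j x ω) (Xn n j x ω) < ε/2 :=
    eventually_all.2 fun j => (Metric.tendstoUniformlyOn_iff.1 (hω j)) (ε/2) (by positivity)
  obtain ⟨N, hNspec⟩ := eventually_atTop.1 hN
  refine ⟨N, fun n hn => ?_⟩
  have hns := hNspec n hn
  -- lower bound : Aε k ⊆ An
  have hlow : Aε k ⊆ {s : ℝ | s ∈ Ioc 0 t ∧ 0 < Xn n i s ω} := by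
    rintro s ⟨hs1, hs2⟩
    refine ⟨hs1, ?_⟩
    have := hns i s (hsub hs1)
    rw [Real.dist_eq, abs_sub_lt_iff] at this
    linarith
  -- upper bound : An ⊆ Ioc \ Bε k
  have hupp : {s : ℝ | s ∈ Ioc 0 t ∧ 0 < Xn n i s ω} ⊆ Ioc 0 t \ Bε k := by
    rintro s ⟨hs1, hs2⟩
    refine ⟨hs1, ?_⟩
    rintro ⟨-, j, hj, hjlt⟩
    have hd := hns j s (hsub hs1)
    rw [Real.dist_eq, abs_sub_lt_iff] at hd
    have hXnj : 0 < Xn n j s ω := by linarith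
    have := hdisjn n i j (Ne.symm hj) s ω
    nlinarith
  have hAnfin : volume {s : ℝ | s ∈ Ioc 0 t ∧ 0 < Xn n i s ω} ≠ ⊤ :=
    hfin _ fun s hs => hs.1
  have hlow' : (volume (Aε k)).toReal
      ≤ (volume {s : ℝ | s ∈ Ioc 0 t ∧ 0 < Xn n i s ω}).toReal :=
    ENNReal.toReal_mono hAnfin (measure_mono hlow)
  have hupp' : (volume {s : ℝ | s ∈ Ioc 0 t ∧ 0 < Xn n i s ω}).toReal
      ≤ (volume (Ioc 0 t \ Bε k)).toReal :=
    ENNReal.toReal_mono (hfin _ (diff_subset)) (measure_mono hupp)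
  rw [hdiff k] at hupp'
  rw [hdiffB] at hkey
  have hlb : (volume A).toReal - δ/2
      < (volume {s : ℝ | s ∈ Ioc 0 t ∧ 0 < Xn n i s ω}).toReal := lt_of_lt_of_le hk1 hlow'
  have hub : (volume {s : ℝ | s ∈ Ioc 0 t ∧ 0 < Xn n i s ω}).toReal
      < (volume A).toReal + δ/2 := by linarith
  rw [Real.dist_eq, abs_sub_lt_iff]
  constructor <;> [skip; skip] <;> linarith
end
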